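/- Gaussian integral with positive-definite imaginary part: if M is a complex symmetric n×n matrix whose imaginary part Im M is positive definite, then ∫_{ℝⁿ} exp((i/2) x·Mx) dx = (2π)^{n/2} · (det(-iM))^{-1/2}, where the square root is determined by the branch continuous along the path M_s = sM + (1-s)iI, s ∈ [0,1], equal to the positive root at M = iI. -/

import Mathlib

open Matrix MeasureTheory Complex

noncomputable section

abbrev qf {n : ℕ} (N : Matrix (Fin n) (Fin n) ℂ) (x : Fin n → ℝ) : ℂ :=
  ∑ i, ∑ j, (x i : ℂ) * N i j * (x j : ℂ)

lemma qf_eq_dot {n : ℕ} (N : Matrix (Fin n) (Fin n) ℂ) (x : Fin n → ℝ) :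
    qf N x = (fun i => (x i : ℂ)) ⬝ᵥ N *ᵥ (fun i => (x i : ℂ)) := by
  simp [qf, dotProduct, Matrix.mulVec, Finset.mul_sum, mul_assoc, mul_comm, mul_left_comm]

lemma coe_mulVec {n : ℕ} (P : Matrix (Fin n) (Fin n) ℝ) (x : Fin n → ℝ) :
    (fun i => ((P *ᵥ x) i : ℂ)) = (P.map Complex.ofRealHom) *ᵥ (fun i => (x i : ℂ)) := by
  ext i
  simp [Matrix.mulVec, dotProduct, Matrix.map_apply]

lemma dot_conj {n : ℕ} (N Q : Matrix (Fin n) (Fin n) ℂ) (v : Fin n → ℂ) :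
    (Q *ᵥ v) ⬝ᵥ N *ᵥ (Q *ᵥ v) = v ⬝ᵥ (Qᵀ * N * Q) *ᵥ v := by
  calc (Q *ᵥ v) ⬝ᵥ N *ᵥ (Q *ᵥ v) = (Q *ᵥ v) ⬝ᵥ (N * Q) *ᵥ v := by rw [Matrix.mulVec_mulVec]
    _ = ((N * Q) *ᵥ v) ⬝ᵥ (Q *ᵥ v) := by rw [dotProduct_comm]
    _ = Matrix.vecMul ((N * Q) *ᵥ v) Q ⬝ᵥ v := by rw [Matrix.dotProduct_mulVec]
    _ = (Qᵀ *ᵥ ((N * Q) *ᵥ v)) ⬝ᵥ v := by rw [Matrix.mulVec_transpose]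
    _ = ((Qᵀ * (N * Q)) *ᵥ v) ⬝ᵥ v := by rw [Matrix.mulVec_mulVec]
    _ = v ⬝ᵥ (Qᵀ * (N * Q)) *ᵥ v := by rw [dotProduct_comm]
    _ = v ⬝ᵥ (Qᵀ * N * Q) *ᵥ v := by rw [mul_assoc]

lemma qf_mulVec {n : ℕ} (N : Matrix (Fin n) (Fin n) ℂ) (P : Matrix (Fin n) (Fin n) ℝ)
    (x : Fin n → ℝ) :
    qf N (P *ᵥ x) = qf ((P.map Complex.ofRealHom)ᵀ * N * (P.map Complex.ofRealHom)) x := by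
  rw [qf_eq_dot, qf_eq_dot, coe_mulVec, dot_conj]

lemma integral_comp_mulVec {n : ℕ} (P : Matrix (Fin n) (Fin n) ℝ) (hP : P.det ≠ 0)
    (f : (Fin n → ℝ) → ℂ) :
    ∫ x, f (P *ᵥ x) = |P.det|⁻¹ • ∫ y, f y := by
  have hdet : LinearMap.det (Matrix.toLin' P) ≠ 0 := by
    rwa [LinearMap.det_toLin']
  set e : (Fin n → ℝ) ≃ₗ[ℝ] (Fin n → ℝ) := LinearMap.equivOfDetNeZero _ hdet
  have he : ⇑e.toContinuousLinearEquiv.toHomeomorph.toMeasurableEquiv = fun x => P *ᵥ x := by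
    ext x
    simp [e, LinearMap.equivOfDetNeZero, Matrix.toLin'_apply]
  have hmap : Measure.map (⇑e.toContinuousLinearEquiv.toHomeomorph.toMeasurableEquiv)
      (volume : Measure (Fin n → ℝ)) = ENNReal.ofReal |P.det|⁻¹ • volume := by
    rw [he]
    have := MeasureTheory.Measure.map_linearMap_addHaar_eq_smul_addHaar
      (volume : Measure (Fin n → ℝ)) (f := Matrix.toLin' P) hdet
    rw [LinearMap.det_toLin'] at this
    simpa [LinearMap.det_toLin', Matrix.toLin'_apply, abs_inv, Matrix.toLin'_apply', Matrix.coe_mulVecLin] using this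
  calc ∫ x, f (P *ᵥ x) = ∫ x, f (e.toContinuousLinearEquiv.toHomeomorph.toMeasurableEquiv x) := by
        rw [he]
    _ = ∫ y, f y ∂(Measure.map (⇑e.toContinuousLinearEquiv.toHomeomorph.toMeasurableEquiv) volume) := by
        rw [MeasureTheory.integral_map_equiv]
    _ = |P.det|⁻¹ • ∫ y, f y := by
        rw [hmap, integral_smul_measure, ENNReal.toReal_ofReal (by positivity)]

lemma integrable_comp_mulVec {n : ℕ} {P : Matrix (Fin n) (Fin n) ℝ} (hP : P.det ≠ 0)
    {f : (Fin n → ℝ) → ℂ} (hf : Integrable f) :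
    Integrable fun x => f (P *ᵥ x) := by
  have hdet : LinearMap.det (Matrix.toLin' P) ≠ 0 := by
    rwa [LinearMap.det_toLin']
  set e : (Fin n → ℝ) ≃ₗ[ℝ] (Fin n → ℝ) := LinearMap.equivOfDetNeZero _ hdet
  have he : ⇑e.toContinuousLinearEquiv.toHomeomorph.toMeasurableEquiv = fun x => P *ᵥ x := by
    ext x
    simp [e, LinearMap.equivOfDetNeZero, Matrix.toLin'_apply]
  have hmap : Measure.map (⇑e.toContinuousLinearEquiv.toHomeomorph.toMeasurableEquiv)
      (volume : Measure (Fin n → ℝ)) = ENNReal.ofReal |P.det|⁻¹ • volume := by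
    rw [he]
    have := MeasureTheory.Measure.map_linearMap_addHaar_eq_smul_addHaar
      (volume : Measure (Fin n → ℝ)) (f := Matrix.toLin' P) hdet
    rw [LinearMap.det_toLin'] at this
    simpa [LinearMap.det_toLin', Matrix.toLin'_apply, abs_inv, Matrix.toLin'_apply', Matrix.coe_mulVecLin] using this
  have h2 : Integrable f (Measure.map (⇑e.toContinuousLinearEquiv.toHomeomorph.toMeasurableEquiv) volume) := by
    rw [hmap]
    exact hf.smul_measure (by simp)
  rw [MeasureTheory.integrable_map_equiv] at h2
  have hcomp : (f ∘ ⇑e.toContinuousLinearEquiv.toHomeomorph.toMeasurableEquiv)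
      = fun x => f (P *ᵥ x) := by
    funext x
    rw [Function.comp_apply, congrFun he x]
  rwa [hcomp] at h2

-- 1D facts
lemma b_re' (d : ℝ) : (0:ℝ) < ((1 - Complex.I * d)/2).re := by
  simp [Complex.div_re]

lemma b_ne (d : ℝ) : ((1 - Complex.I * d)/2) ≠ 0 := by
  intro h
  have := b_re' d
  rw [h] at this
  simp at this

lemma neg_b' (d : ℝ) : (Complex.I/2) * ((d:ℂ) + Complex.I) = -((1 - Complex.I * d)/2) := by
  ring_nf
  rw [Complex.I_sq]
  ring

lemma oneD_sq (d : ℝ) :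
    ((↑Real.pi / ((1 - Complex.I * d)/2)) ^ (1/2 : ℂ)) ^ 2
      = ↑Real.pi / ((1 - Complex.I * d)/2) := by
  have hpi : (↑Real.pi / ((1 - Complex.I * d)/2)) ≠ 0 := by
    apply div_ne_zero _ (b_ne d)
    exact_mod_cast Real.pi_ne_zero
  rw [sq, ← Complex.cpow_add _ _ hpi]
  norm_num

lemma qf_diagonal {n : ℕ} (g : Fin n → ℂ) (x : Fin n → ℝ) :
    qf (diagonal g) x = ∑ i, g i * (x i : ℂ)^2 := by
  unfold qf
  rw [Finset.sum_congr rfl (fun i _ => Finset.sum_eq_single i ?_ ?_)]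
  · apply Finset.sum_congr rfl
    intro i _
    simp [diagonal_apply_eq]
    ring
  · intro j _ hj
    simp [diagonal_apply_ne' _ hj]
  · intro h
    simp at h

lemma integrand_prod {n : ℕ} (d : Fin n → ℝ) (x : Fin n → ℝ) :
    Complex.exp ((Complex.I/2) * qf (diagonal fun i => (d i : ℂ) + Complex.I) x)
      = ∏ i, Complex.exp ((Complex.I/2) * ((d i : ℂ) + Complex.I) * (x i : ℂ)^2) := by
  rw [qf_diagonal, Finset.mul_sum, Complex.exp_sum]
  apply Finset.prod_congr rfl
  intro i _
  ring_nf

lemma diag_integrable {n : ℕ} (d : Fin n → ℝ) :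
    Integrable fun x : Fin n → ℝ =>
      Complex.exp ((Complex.I/2) * qf (diagonal fun i => (d i : ℂ) + Complex.I) x) := by
  simp_rw [integrand_prod d]
  apply Integrable.fintype_prod (f := fun i (t : ℝ) => Complex.exp ((Complex.I/2) * ((d i : ℂ) + Complex.I) * (t:ℂ)^2))
  intro i
  simp_rw [neg_b' (d i)]
  exact_mod_cast integrable_cexp_neg_mul_sq (b_re' (d i))

lemma diag_integral {n : ℕ} (d : Fin n → ℝ) :
    ∫ x : Fin n → ℝ,
        Complex.exp ((Complex.I/2) * qf (diagonal fun i => (d i : ℂ) + Complex.I) x)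
      = ∏ i, (↑Real.pi / ((1 - Complex.I * d i)/2)) ^ (1/2 : ℂ) := by
  simp_rw [integrand_prod d]
  rw [integral_fintype_prod_volume_eq_prod (f := fun i (t : ℝ) => Complex.exp ((Complex.I/2) * ((d i : ℂ) + Complex.I) * (t:ℂ)^2))]
  apply Finset.prod_congr rfl
  intro i _
  simp_rw [neg_b' (d i)]
  exact_mod_cast integral_gaussian_complex (b_re' (d i))

open scoped MatrixOrder in
lemma key_matrix {n : ℕ} (N : Matrix (Fin n) (Fin n) ℂ) (hsym : Nᵀ = N)
    {B : Matrix (Fin n) (Fin n) ℝ} (hB : ∀ i j, B i j = (N i j).im) (hBpos : B.PosDef) :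
    ∃ (P : Matrix (Fin n) (Fin n) ℝ) (d : Fin n → ℝ),
      P.det ^ 2 * B.det = 1 ∧ P.det ≠ 0 ∧
      (P.map Complex.ofRealHom)ᵀ * N * (P.map Complex.ofRealHom)
        = diagonal (fun i => (d i : ℂ) + Complex.I) := by
  classical
  set A : Matrix (Fin n) (Fin n) ℝ := fun i j => (N i j).re with hA
  have hdetB : (0:ℝ) < B.det := hBpos.det_pos
  set C : Matrix (Fin n) (Fin n) ℝ := CFC.sqrt B with hC
  have hCC : C * C = B := CFC.sqrt_mul_sqrt_self B hBpos.posSemidef.nonneg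
  have hCt : Cᵀ = C := by
    have h := (CFC.sqrt_nonneg B).posSemidef.1
    rwa [Matrix.IsHermitian, conjTranspose_eq_transpose_of_trivial] at h
  have hdetC2 : C.det ^ 2 = B.det := by rw [sq, ← det_mul, hCC]
  have hdetC : C.det ≠ 0 := by
    intro h
    rw [h] at hdetC2
    simp at hdetC2
    exact hdetB.ne' hdetC2.symm
  have hCinv : C * C⁻¹ = 1 := Matrix.mul_nonsing_inv C hdetC.isUnit
  have hCinv' : C⁻¹ * C = 1 := Matrix.nonsing_inv_mul C hdetC.isUnit
  have hCit : (C⁻¹)ᵀ = C⁻¹ := by rw [Matrix.transpose_nonsing_inv, hCt]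
  have hAt : Aᵀ = A := by
    ext i j
    have h := congrFun (congrFun hsym i) j
    simp only [transpose_apply] at h
    simp only [hA, transpose_apply, h]
    exact congrArg Complex.re h
  set A' : Matrix (Fin n) (Fin n) ℝ := C⁻¹ * A * C⁻¹ with hA'
  have hA'h : A'.IsHermitian := by
    rw [Matrix.IsHermitian, conjTranspose_eq_transpose_of_trivial, hA',
      Matrix.transpose_mul, Matrix.transpose_mul, hCit, hAt, mul_assoc]
  set d := hA'h.eigenvalues with hd
  set U : Matrix (Fin n) (Fin n) ℝ := (hA'h.eigenvectorUnitary : Matrix (Fin n) (Fin n) ℝ) with hU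
  have hUt : star U = Uᵀ := by
    rw [Matrix.star_eq_conjTranspose, conjTranspose_eq_transpose_of_trivial]
  have hspec : Uᵀ * A' * U = diagonal d := by
    have h : star U * A' * U = diagonal d := by
      have h0 := hA'h.conjStarAlgAut_star_eigenvectorUnitary
      rw [Unitary.conjStarAlgAut_star_apply] at h0
      simpa using h0
    rw [hUt] at h
    convert h using 2
  have hUU : Uᵀ * U = 1 := by
    rw [← hUt]
    exact Unitary.coe_star_mul_self _
  have hdetU2 : U.det ^ 2 = 1 := by
    have := congrArg Matrix.det hUU
    rwa [det_mul, det_transpose, ← sq, det_one] at this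
  refine ⟨C⁻¹ * U, d, ?_, ?_, ?_⟩
  · rw [det_mul, Matrix.det_nonsing_inv, Ring.inverse_eq_inv', mul_pow, hdetU2, mul_one, ← hdetC2]
    field_simp
  · rw [det_mul, Matrix.det_nonsing_inv]
    intro h
    rcases mul_eq_zero.1 h with h | h
    · exact hdetC (by simpa using h)
    · rw [h] at hdetU2; simp at hdetU2
  · have hNsplit : N = A.map Complex.ofRealHom + Complex.I • B.map Complex.ofRealHom := by
      ext i j
      simp only [Matrix.add_apply, Matrix.smul_apply, Matrix.map_apply, hA, hB i j]
      apply Complex.ext <;> simp <;> rfl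
    have hPAP : (C⁻¹ * U)ᵀ * A * (C⁻¹ * U) = diagonal d := by
      rw [Matrix.transpose_mul, hCit]
      calc Uᵀ * C⁻¹ * A * (C⁻¹ * U) = Uᵀ * (C⁻¹ * A * C⁻¹) * U := by
            simp only [mul_assoc]
        _ = diagonal d := hspec
    have hPBP : (C⁻¹ * U)ᵀ * B * (C⁻¹ * U) = 1 := by
      rw [Matrix.transpose_mul, hCit, ← hCC]
      calc Uᵀ * C⁻¹ * (C * C) * (C⁻¹ * U)
          = Uᵀ * ((C⁻¹ * C) * (C * C⁻¹)) * U := by simp only [mul_assoc]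
        _ = Uᵀ * U := by rw [hCinv, hCinv', mul_one, mul_one]
        _ = 1 := hUU
    rw [hNsplit]
    have hmap : ∀ X Y : Matrix (Fin n) (Fin n) ℝ,
        (X.map Complex.ofRealHom) * (Y.map Complex.ofRealHom) = (X * Y).map Complex.ofRealHom :=
      fun X Y => (Matrix.map_mul).symm
    have htr : ((C⁻¹ * U).map Complex.ofRealHom)ᵀ = ((C⁻¹ * U)ᵀ).map Complex.ofRealHom := by
      rw [Matrix.transpose_map]
    rw [← mul_assoc] at hPAP hPBP
    rw [htr, mul_add, add_mul, Matrix.mul_smul, Matrix.smul_mul, hmap, hmap, hmap, hmap,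
      ← mul_assoc, ← mul_assoc, hPAP, hPBP]
    ext i j
    rcases eq_or_ne i j with h | h
    · subst h
      simp [Matrix.diagonal_apply_eq, Matrix.one_apply_eq]
    · simp [Matrix.diagonal_apply_ne _ h, Matrix.one_apply_ne h]

lemma gauss_core {n : ℕ} (N : Matrix (Fin n) (Fin n) ℂ) (hsym : Nᵀ = N)
    {B : Matrix (Fin n) (Fin n) ℝ} (hB : ∀ i j, B i j = (N i j).im) (hBpos : B.PosDef) :
    Integrable (fun x : Fin n → ℝ => Complex.exp ((Complex.I/2) * qf N x)) ∧
    (∫ x : Fin n → ℝ, Complex.exp ((Complex.I/2) * qf N x)) ^ 2 * ((-Complex.I) • N).det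
      = ((2 * Real.pi : ℝ) : ℂ) ^ n := by
  obtain ⟨P, d, hP2, hPdet, hKey⟩ := key_matrix N hsym hB hBpos
  set f : (Fin n → ℝ) → ℂ := fun x => Complex.exp ((Complex.I/2) * qf N x) with hf
  have hfP : (fun y => f (P *ᵥ y))
      = fun y => Complex.exp ((Complex.I/2) * qf (diagonal fun i => (d i : ℂ) + Complex.I) y) := by
    ext y
    rw [hf]
    simp only
    rw [qf_mulVec, hKey]
  have hint_diag := diag_integrable d
  have hint_comp : Integrable fun y => f (P *ᵥ y) := by
    rw [hfP]; exact hint_diag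
  have hintf : Integrable f := by
    have hPinv : (P⁻¹).det ≠ 0 := by
      rw [Matrix.det_nonsing_inv]
      simpa using hPdet
    have := integrable_comp_mulVec hPinv hint_comp
    simp only [Matrix.mulVec_mulVec, Matrix.mul_nonsing_inv P hPdet.isUnit,
      Matrix.one_mulVec] at this
    exact this
  refine ⟨hintf, ?_⟩
  have habs : |P.det| ≠ 0 := abs_ne_zero.2 hPdet
  have habsC : ((|P.det| : ℝ) : ℂ) ≠ 0 := by exact_mod_cast habs
  -- value of the integral
  have hval : ∫ x, f x
      = ((|P.det| : ℝ) : ℂ) * ∏ i, (↑Real.pi / ((1 - Complex.I * d i)/2)) ^ (1/2 : ℂ) := by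
    have h1 := integral_comp_mulVec P hPdet f
    rw [hfP, diag_integral d, Complex.real_smul, Complex.ofReal_inv] at h1
    rw [h1, ← mul_assoc, mul_inv_cancel₀ habsC, one_mul]
  -- square of the integral
  have hsq : (∫ x, f x) ^ 2
      = ((P.det : ℝ) : ℂ) ^ 2 * ∏ i, (↑Real.pi / ((1 - Complex.I * d i)/2)) := by
    rw [hval, mul_pow, ← Finset.prod_pow]
    congr 1
    · rw [← Complex.ofReal_pow, _root_.sq_abs P.det, Complex.ofReal_pow]
    · exact Finset.prod_congr rfl fun i _ => oneD_sq (d i)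
  -- determinant computations
  have hdetN : ((-Complex.I) • N).det = (-Complex.I) ^ n * N.det := by
    rw [det_smul, Fintype.card_fin]
  have hQ : ((P.det : ℝ) : ℂ) ^ 2 * N.det = ∏ i, ((d i : ℂ) + Complex.I) := by
    have h := congrArg Matrix.det hKey
    rw [det_mul, det_mul, det_transpose, det_diagonal] at h
    have hdm : (P.map Complex.ofRealHom).det = ((P.det : ℝ) : ℂ) :=
      (RingHom.map_det Complex.ofRealHom P).symm
    rw [hdm] at h
    linear_combination h
  have hfac : ∀ i : Fin n,
      (↑Real.pi / ((1 - Complex.I * d i)/2)) * ((-Complex.I) * ((d i : ℂ) + Complex.I))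
        = ((2 * Real.pi : ℝ) : ℂ) := by
    intro i
    have h2 : (-Complex.I) * ((d i : ℂ) + Complex.I) = 2 * ((1 - Complex.I * d i)/2) := by
      ring_nf
      rw [Complex.I_sq]
      ring
    have hne : (1 - Complex.I * (d i : ℂ)) ≠ 0 := by
      intro h
      apply b_ne (d i)
      rw [h, zero_div]
    rw [h2]
    push_cast
    field_simp [hne]
  calc (∫ x, f x) ^ 2 * ((-Complex.I) • N).det
      = (∏ i, (↑Real.pi / ((1 - Complex.I * d i)/2))) *
          ((((P.det : ℝ) : ℂ)) ^ 2 * N.det) * (-Complex.I) ^ n := by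
        rw [hsq, hdetN]; ring
    _ = (∏ i, (↑Real.pi / ((1 - Complex.I * d i)/2))) *
          (∏ i, ((d i : ℂ) + Complex.I)) * ∏ _i : Fin n, (-Complex.I) := by
        rw [hQ, Finset.prod_const, Finset.card_univ, Fintype.card_fin]
    _ = ∏ i, ((↑Real.pi / ((1 - Complex.I * d i)/2)) * ((-Complex.I) * ((d i : ℂ) + Complex.I))) := by
        rw [Finset.prod_mul_distrib, Finset.prod_mul_distrib]
        ring
    _ = ∏ _i : Fin n, ((2 * Real.pi : ℝ) : ℂ) := Finset.prod_congr rfl fun i _ => hfac i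
    _ = ((2 * Real.pi : ℝ) : ℂ) ^ n := by
        rw [Finset.prod_const, Finset.card_univ, Fintype.card_fin]

abbrev rqf {n : ℕ} (B : Matrix (Fin n) (Fin n) ℝ) (x : Fin n → ℝ) : ℝ :=
  ∑ i, ∑ j, x i * B i j * x j

lemma norm_integrand {n : ℕ} (N : Matrix (Fin n) (Fin n) ℂ)
    {B : Matrix (Fin n) (Fin n) ℝ} (hB : ∀ i j, B i j = (N i j).im) (x : Fin n → ℝ) :
    ‖Complex.exp ((Complex.I/2) * qf N x)‖ = Real.exp (-(1/2) * rqf B x) := by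
  rw [Complex.norm_exp]
  congr 1
  have him : (qf N x).im = rqf B x := by
    unfold qf rqf
    rw [Complex.im_sum]
    refine Finset.sum_congr rfl fun i _ => ?_
    rw [Complex.im_sum]
    refine Finset.sum_congr rfl fun j _ => ?_
    rw [hB i j]
    simp [Complex.mul_im]
  rw [Complex.mul_re]
  simp only [Complex.div_re, Complex.div_im, Complex.I_re, Complex.I_im]
  rw [him]
  norm_num

lemma rqf_dot {n : ℕ} (B : Matrix (Fin n) (Fin n) ℝ) (x : Fin n → ℝ) :
    rqf B x = x ⬝ᵥ B *ᵥ x := by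
  simp [rqf, dotProduct, Matrix.mulVec, Finset.mul_sum, mul_assoc, mul_comm, mul_left_comm]

lemma rqf_pos {n : ℕ} {B : Matrix (Fin n) (Fin n) ℝ} (hB : B.PosDef) {x : Fin n → ℝ}
    (hx : x ≠ 0) : 0 < rqf B x := by
  rw [rqf_dot]
  have := hB.dotProduct_mulVec_pos hx
  simpa using this

lemma rqf_nonneg {n : ℕ} {B : Matrix (Fin n) (Fin n) ℝ} (hB : B.PosSemidef) (x : Fin n → ℝ) :
    0 ≤ rqf B x := by
  rw [rqf_dot]
  have := hB.dotProduct_mulVec_nonneg x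
  simpa using this

lemma rqf_combo {n : ℕ} (s t : ℝ) (A B : Matrix (Fin n) (Fin n) ℝ) (x : Fin n → ℝ) :
    rqf (s • A + t • B) x = s * rqf A x + t * rqf B x := by
  unfold rqf
  rw [Finset.mul_sum, Finset.mul_sum, ← Finset.sum_add_distrib]
  refine Finset.sum_congr rfl fun i _ => ?_
  rw [Finset.mul_sum, Finset.mul_sum, ← Finset.sum_add_distrib]
  refine Finset.sum_congr rfl fun j _ => ?_
  simp only [Matrix.add_apply, Matrix.smul_apply, smul_eq_mul]
  ring

lemma combo_posdef {n : ℕ} {B : Matrix (Fin n) (Fin n) ℝ} (hB : B.PosDef)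
    {s : ℝ} (hs : s ∈ Set.Icc (0:ℝ) 1) :
    (s • B + (1 - s) • (1 : Matrix (Fin n) (Fin n) ℝ)).PosDef := by
  have hBt : Bᵀ = B := by
    have h := hB.1
    rwa [Matrix.IsHermitian, conjTranspose_eq_transpose_of_trivial] at h
  refine Matrix.PosDef.of_dotProduct_mulVec_pos ?_ ?_
  · rw [Matrix.IsHermitian, conjTranspose_eq_transpose_of_trivial, transpose_add,
      transpose_smul, transpose_smul, hBt, transpose_one]
  · intro x hx
    have h1 : 0 < rqf B x := rqf_pos hB hx
    have h0 : 0 < rqf (1 : Matrix (Fin n) (Fin n) ℝ) x := rqf_pos Matrix.PosDef.one hx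
    have hval : x ⬝ᵥ (s • B + (1 - s) • (1 : Matrix (Fin n) (Fin n) ℝ)) *ᵥ x
        = s * rqf B x + (1 - s) * rqf (1 : Matrix (Fin n) (Fin n) ℝ) x := by
      rw [← rqf_combo, rqf_dot]
    have : (0:ℝ) < s * rqf B x + (1 - s) * rqf (1 : Matrix (Fin n) (Fin n) ℝ) x := by
      rcases le_total (rqf B x) (rqf (1 : Matrix (Fin n) (Fin n) ℝ) x) with h | h
      · nlinarith [mul_nonneg (sub_nonneg.2 hs.2) (sub_nonneg.2 h), hs.1, hs.2]
      · nlinarith [mul_nonneg hs.1 (sub_nonneg.2 h), hs.1, hs.2]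
    simpa [hval] using this

lemma cont_integrand {n : ℕ} (N : Matrix (Fin n) (Fin n) ℂ) :
    Continuous fun x : Fin n → ℝ => Complex.exp ((Complex.I/2) * qf N x) := by
  apply Complex.continuous_exp.comp
  apply Continuous.mul continuous_const
  apply continuous_finset_sum
  intro i _
  apply continuous_finset_sum
  intro j _
  exact ((Complex.continuous_ofReal.comp (continuous_apply i)).mul continuous_const).mul
    (Complex.continuous_ofReal.comp (continuous_apply j))

lemma exp_combo_le {a b s : ℝ} (ha : 0 ≤ a) (hb : 0 ≤ b) (hs : s ∈ Set.Icc (0:ℝ) 1) :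
    Real.exp (-(1/2) * (s*a + (1-s)*b)) ≤ Real.exp (-(1/2)*a) + Real.exp (-(1/2)*b) := by
  rcases le_total a b with h | h
  · have hle : -(1/2) * (s*a + (1-s)*b) ≤ -(1/2)*a := by
      nlinarith [mul_nonneg (sub_nonneg.2 hs.2) (sub_nonneg.2 h)]
    calc Real.exp (-(1/2) * (s*a + (1-s)*b)) ≤ Real.exp (-(1/2)*a) := Real.exp_le_exp.2 hle
      _ ≤ _ := le_add_of_nonneg_right (Real.exp_pos _).le
  · have hle : -(1/2) * (s*a + (1-s)*b) ≤ -(1/2)*b := by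
      nlinarith [mul_nonneg hs.1 (sub_nonneg.2 h)]
    calc Real.exp (-(1/2) * (s*a + (1-s)*b)) ≤ Real.exp (-(1/2)*b) := Real.exp_le_exp.2 hle
      _ ≤ _ := le_add_of_nonneg_left (Real.exp_pos _).le

def pathM {n : ℕ} (M : Matrix (Fin n) (Fin n) ℂ) (s : ℝ) : Matrix (Fin n) (Fin n) ℂ :=
  (s : ℂ) • M + ((1 : ℂ) - (s : ℂ)) • (Complex.I • (1 : Matrix (Fin n) (Fin n) ℂ))

lemma pathM_one {n : ℕ} (M : Matrix (Fin n) (Fin n) ℂ) : pathM M 1 = M := by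
  simp [pathM]

lemma pathM_zero {n : ℕ} (M : Matrix (Fin n) (Fin n) ℂ) :
    pathM M 0 = Complex.I • (1 : Matrix (Fin n) (Fin n) ℂ) := by
  simp [pathM]

lemma pathM_transpose {n : ℕ} {M : Matrix (Fin n) (Fin n) ℂ} (hsym : Mᵀ = M) (s : ℝ) :
    (pathM M s)ᵀ = pathM M s := by
  simp [pathM, transpose_add, transpose_smul, hsym]

lemma pathM_im {n : ℕ} {M : Matrix (Fin n) (Fin n) ℂ} {ImM : Matrix (Fin n) (Fin n) ℝ}
    (hImM : ∀ i j, ImM i j = (M i j).im) (s : ℝ) (i j : Fin n) :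
    (s • ImM + (1 - s) • (1 : Matrix (Fin n) (Fin n) ℝ)) i j = (pathM M s i j).im := by
  simp only [pathM, Matrix.add_apply, Matrix.smul_apply, smul_eq_mul, Complex.add_im,
    Complex.mul_im, Complex.ofReal_re, Complex.ofReal_im, Complex.sub_re, Complex.sub_im,
    Complex.one_re, Complex.one_im, hImM i j]
  rcases eq_or_ne i j with h | h
  · subst h
    simp [Matrix.one_apply_eq, Complex.mul_im]
  · simp [Matrix.one_apply_ne h, Complex.mul_im]

lemma pathM_entry_cont {n : ℕ} (M : Matrix (Fin n) (Fin n) ℂ) (i j : Fin n) :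
    Continuous fun s : ℝ => pathM M s i j := by
  simp only [pathM, Matrix.add_apply, Matrix.smul_apply, smul_eq_mul]
  exact (Complex.continuous_ofReal.mul continuous_const).add
    ((continuous_const.sub Complex.continuous_ofReal).mul continuous_const)

lemma F_zero {n : ℕ} :
    ∫ x : Fin n → ℝ,
        Complex.exp ((Complex.I/2) * qf (Complex.I • (1 : Matrix (Fin n) (Fin n) ℂ)) x)
      = (((2 * Real.pi) ^ ((n : ℝ) / 2) : ℝ) : ℂ) := by
  have hdiag : (Complex.I • (1 : Matrix (Fin n) (Fin n) ℂ))
      = diagonal (fun i : Fin n => (((0:ℝ) : ℂ)) + Complex.I) := by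
    ext i j
    rcases eq_or_ne i j with h | h
    · subst h; simp [Matrix.one_apply_eq, diagonal_apply_eq]
    · simp [Matrix.one_apply_ne h, diagonal_apply_ne _ h]
  rw [hdiag, diag_integral (fun _ : Fin n => (0:ℝ))]
  have hfac : (↑Real.pi / ((1 - Complex.I * ((0:ℝ):ℂ))/2)) = (((2 * Real.pi : ℝ)) : ℂ) := by
    push_cast
    norm_num
    ring
  rw [Finset.prod_congr rfl (fun i _ => by rw [hfac]), Finset.prod_const, Finset.card_univ,
    Fintype.card_fin]
  have h2pi : (0:ℝ) ≤ 2 * Real.pi := by positivity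
  have hcpow : ((2 * Real.pi : ℝ) : ℂ) ^ ((1:ℂ)/2) = ((((2 * Real.pi) ^ ((1:ℝ)/2) : ℝ)) : ℂ) := by
    rw [Complex.ofReal_cpow h2pi]
    push_cast
    ring_nf
  rw [hcpow, ← Complex.ofReal_pow]
  congr 1
  rw [← Real.rpow_natCast ((2 * Real.pi) ^ ((1:ℝ)/2)) n, ← Real.rpow_mul h2pi]
  congr 1
  ring


/-- Gaussian integral with positive-definite imaginary part: if M is complex
symmetric with Im M positive definite, then
∫_{ℝⁿ} exp((i/2) x·Mx) dx = (2π)^{n/2} (det(-iM))^{-1/2}, where the square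
root is the branch continuous along the path M_s = sM + (1-s)iI, equal to
the positive root 1 at M₀ = iI. -/
theorem stmt_14 (n : ℕ) (M : Matrix (Fin n) (Fin n) ℂ)
    (hsym : Mᵀ = M)
    (ImM : Matrix (Fin n) (Fin n) ℝ)
    (hImM : ∀ i j, ImM i j = (M i j).im)
    (hpos : ImM.PosDef)
    (r : ℝ → ℂ)
    (hr : ContinuousOn r (Set.Icc 0 1))
    (hr2 : ∀ s ∈ Set.Icc (0 : ℝ) 1,
      r s ^ 2 =
        (-(Complex.I) • ((s : ℂ) • M +
          ((1 : ℂ) - (s : ℂ)) • (Complex.I • (1 : Matrix (Fin n) (Fin n) ℂ)))).det)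
    (hr0 : r 0 = 1) :
    ∫ x : Fin n → ℝ,
        Complex.exp ((Complex.I / 2) * ∑ i, ∑ j, (x i : ℂ) * M i j * (x j : ℂ))
      = (((2 * Real.pi) ^ ((n : ℝ) / 2) : ℝ) : ℂ) * (r 1)⁻¹ := by
  have hr2' : ∀ s ∈ Set.Icc (0 : ℝ) 1, r s ^ 2 = ((-Complex.I) • pathM M s).det :=
    fun s hs => hr2 s hs
  set c : ℝ := (2 * Real.pi) ^ ((n : ℝ) / 2) with hc
  have hcpos : 0 < c := Real.rpow_pos_of_pos (by positivity) _
  have hcsq : ((c : ℝ) : ℂ) ^ 2 = ((2 * Real.pi : ℝ) : ℂ) ^ n := by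
    rw [← Complex.ofReal_pow, ← Complex.ofReal_pow]
    congr 1
    rw [hc, ← Real.rpow_natCast ((2 * Real.pi) ^ ((n:ℝ)/2)) 2, ← Real.rpow_mul (by positivity),
      ← Real.rpow_natCast (2 * Real.pi) n]
    congr 1
    push_cast
    ring
  -- positivity of the path imaginary parts
  have hBspos : ∀ s ∈ Set.Icc (0:ℝ) 1, (s • ImM + (1 - s) • (1 : Matrix (Fin n) (Fin n) ℝ)).PosDef :=
    fun s hs => combo_posdef hpos hs
  have hcore : ∀ s ∈ Set.Icc (0:ℝ) 1,
      Integrable (fun x : Fin n → ℝ => Complex.exp ((Complex.I/2) * qf (pathM M s) x)) ∧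
      (∫ x : Fin n → ℝ, Complex.exp ((Complex.I/2) * qf (pathM M s) x)) ^ 2
        * ((-Complex.I) • pathM M s).det = ((2 * Real.pi : ℝ) : ℂ) ^ n :=
    fun s hs => gauss_core (pathM M s) (pathM_transpose hsym s) (pathM_im hImM s) (hBspos s hs)
  set F : ℝ → ℂ := fun s => ∫ x : Fin n → ℝ, Complex.exp ((Complex.I/2) * qf (pathM M s) x) with hF
  -- continuity of F
  have hFcont : ContinuousOn F (Set.Icc 0 1) := by
    apply continuousOn_of_dominated (bound := fun x : Fin n → ℝ =>
      Real.exp (-(1/2) * rqf ImM x) + Real.exp (-(1/2) * rqf (1 : Matrix (Fin n) (Fin n) ℝ) x))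
    · intro s _
      exact (cont_integrand (pathM M s)).aestronglyMeasurable
    · intro s hs
      refine Filter.Eventually.of_forall fun x => ?_
      rw [norm_integrand (pathM M s) (pathM_im hImM s) x, rqf_combo]
      exact exp_combo_le (rqf_nonneg hpos.posSemidef x)
        (rqf_nonneg Matrix.PosDef.one.posSemidef x) hs
    · have h1 := ((hcore 1 ⟨zero_le_one, le_refl 1⟩).1).norm
      have h0 := ((hcore 0 ⟨le_refl 0, zero_le_one⟩).1).norm
      have e1 : (fun x : Fin n → ℝ => ‖Complex.exp ((Complex.I/2) * qf (pathM M 1) x)‖)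
          = fun x => Real.exp (-(1/2) * rqf ImM x) := by
        funext x
        rw [norm_integrand (pathM M 1) (pathM_im hImM 1) x]
        congr 2
        simp
      have e0 : (fun x : Fin n → ℝ => ‖Complex.exp ((Complex.I/2) * qf (pathM M 0) x)‖)
          = fun x => Real.exp (-(1/2) * rqf (1 : Matrix (Fin n) (Fin n) ℝ) x) := by
        funext x
        rw [norm_integrand (pathM M 0) (pathM_im hImM 0) x]
        congr 2
        simp
      rw [e1] at h1
      rw [e0] at h0
      exact h1.add h0
    · refine Filter.Eventually.of_forall fun x => ?_
      apply Continuous.continuousOn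
      apply Complex.continuous_exp.comp
      apply Continuous.mul continuous_const
      apply continuous_finset_sum
      intro i _
      apply continuous_finset_sum
      intro j _
      exact (continuous_const.mul (pathM_entry_cont M i j)).mul continuous_const
  -- the product G
  set G : ℝ → ℂ := fun s => F s * r s with hG
  have hGcont : ContinuousOn G (Set.Icc 0 1) := hFcont.mul hr
  have hGsq : ∀ s ∈ Set.Icc (0:ℝ) 1, G s ^ 2 = ((c : ℝ) : ℂ) ^ 2 := by
    intro s hs
    have h2 := (hcore s hs).2
    calc G s ^ 2 = F s ^ 2 * r s ^ 2 := by rw [hG]; ring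
      _ = F s ^ 2 * ((-Complex.I) • pathM M s).det := by rw [hr2' s hs]
      _ = ((2 * Real.pi : ℝ) : ℂ) ^ n := h2
      _ = ((c : ℝ) : ℂ) ^ 2 := hcsq.symm
  have hGpm : ∀ s ∈ Set.Icc (0:ℝ) 1, G s = ((c : ℝ) : ℂ) ∨ G s = -((c : ℝ) : ℂ) := by
    intro s hs
    exact sq_eq_sq_iff_eq_or_eq_neg.1 (hGsq s hs)
  have hG0 : G 0 = ((c : ℝ) : ℂ) := by
    have hF0 : F 0 = ((c : ℝ) : ℂ) := by
      rw [hF]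
      simp only
      rw [pathM_zero]
      exact F_zero
    rw [hG]
    simp only
    rw [hF0, hr0, mul_one]
  have hG1 : G 1 = ((c : ℝ) : ℂ) := by
    rcases hGpm 1 ⟨zero_le_one, le_refl 1⟩ with h | h
    · exact h
    · exfalso
      have hrecont : ContinuousOn (fun s => (G s).re) (Set.Icc 0 1) :=
        Complex.continuous_re.comp_continuousOn hGcont
      have hmem : (0:ℝ) ∈ Set.Icc ((fun s => (G s).re) 1) ((fun s => (G s).re) 0) := by
        simp only [h, hG0, Complex.neg_re, Complex.ofReal_re]
        constructor <;> linarith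
      obtain ⟨s, hsmem, hs0⟩ := intermediate_value_Icc' zero_le_one hrecont hmem
      have hs0' : (G s).re = 0 := hs0
      rcases hGpm s hsmem with h' | h'
      · rw [h'] at hs0'
        simp only [Complex.ofReal_re] at hs0'
        exact hcpos.ne' hs0'
      · rw [h'] at hs0'
        simp only [Complex.neg_re, Complex.ofReal_re] at hs0'
        have : c = 0 := by linarith
        exact hcpos.ne' this
  -- conclude
  have hr1ne : r 1 ≠ 0 := by
    intro h
    rw [hG] at hG1
    simp only [h, mul_zero] at hG1
    have : c = 0 := by exact_mod_cast hG1.symm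
    exact hcpos.ne' this
  have hF1 : F 1 = ((c : ℝ) : ℂ) * (r 1)⁻¹ := by
    have := hG1
    rw [hG] at this
    simp only at this
    field_simp at this ⊢
    linear_combination this
  have hgoal : (∫ x : Fin n → ℝ,
      Complex.exp ((Complex.I / 2) * ∑ i, ∑ j, (x i : ℂ) * M i j * (x j : ℂ))) = F 1 := by
    rw [hF]
    simp only
    rw [pathM_one]
  rw [hgoal, hF1]
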